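/- arXiv:2107.04405 — 3 statements merged into one kernel-verified Lean document; each statement's English description precedes it below -/
import Mathlib

section
/- Let a : ℝ → ℝ be positive and twice differentiable with a'' never zero, and suppose (a·a'' − (a')²)/(a³·a'') = −1/ε for a nonzero constant ε. Then the function t ↦ (a'(t)²/a(t)²)·(ε + a(t)²) is constant. -/
theorem stmt_2 (a : ℝ → ℝ) (ε : ℝ) (hε : ε ≠ 0)
    (ha : ∀ t, 0 < a t)
    (hd1 : Differentiable ℝ a)
    (hd2 : Differentiable ℝ (deriv a))
    (ha'' : ∀ t, deriv (deriv a) t ≠ 0)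
    (hode : ∀ t, (a t * deriv (deriv a) t - (deriv a t) ^ 2) /
      ((a t) ^ 3 * deriv (deriv a) t) = - 1 / ε) :
    ∃ ψ : ℝ, ∀ t, (deriv a t) ^ 2 / (a t) ^ 2 * (ε + (a t) ^ 2) = ψ := by
  set f : ℝ → ℝ := fun t => (deriv a t) ^ 2 / (a t) ^ 2 * (ε + (a t) ^ 2) with hf
  have key : ∀ t, HasDerivAt f 0 t := by
    intro t
    have hA : a t ≠ 0 := (ha t).ne'
    have hA2 : (a t) ^ 2 ≠ 0 := pow_ne_zero 2 hA
    have h1 : HasDerivAt a (deriv a t) t := (hd1 t).hasDerivAt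
    have h2 : HasDerivAt (deriv a) (deriv (deriv a) t) t := (hd2 t).hasDerivAt
    have hnum : HasDerivAt (fun t => (deriv a t) ^ 2)
        (2 * deriv a t * deriv (deriv a) t) t := by
      have := h2.fun_pow 2
      simpa [mul_comm, mul_assoc, mul_left_comm] using this
    have hden : HasDerivAt (fun t => (a t) ^ 2) (2 * a t * deriv a t) t := by
      have := h1.fun_pow 2
      simpa [mul_comm, mul_assoc, mul_left_comm] using this
    have hquot := hnum.div hden hA2
    have hadd : HasDerivAt (fun t => ε + (a t) ^ 2) (2 * a t * deriv a t) t := by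
      simpa using (hden.const_add ε)
    have hmul := hquot.mul hadd
    have hode' : ε * (a t * deriv (deriv a) t - (deriv a t) ^ 2)
        = - ((a t) ^ 3 * deriv (deriv a) t) := by
      have h3 : (a t) ^ 3 * deriv (deriv a) t ≠ 0 :=
        mul_ne_zero (pow_ne_zero 3 hA) (ha'' t)
      have h := hode t
      rw [div_eq_div_iff h3 hε] at h
      nlinarith [h]
    refine hmul.congr_deriv ?_
    symm
    simp only [Pi.div_apply]
    have h3 : (a t) ^ 3 ≠ 0 := pow_ne_zero 3 hA
    field_simp
    linear_combination (-2 * deriv a t) * hode'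
  refine ⟨f 0, fun t => ?_⟩
  have : ∀ x y : ℝ, f x = f y :=
    is_const_of_deriv_eq_zero (fun x => (key x).differentiableAt)
      (fun x => (key x).deriv)
  exact this t 0
end

section
/- Let ε₀ > 0 and let a : I → ℝ be a differentiable function on an interval I with 0 < a(t) < ε₀ satisfying (a'(t)/a(t))·√(ε₀² − a(t)²) = ε₁ for a constant ε₁. Then there exists a constant ε₂ such that √(ε₀² − a(t)²) − ε₀·ln(ε₀ + √(ε₀² − a(t)²)) + ε₀·ln a(t) = ε₁ t + ε₂ for all t ∈ I. -/
theorem stmt_5 (I : Set ℝ) (hI : Convex ℝ I) (a : ℝ → ℝ) (ε₀ ε₁ : ℝ)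
    (hε₀ : 0 < ε₀)
    (ha : ∀ t ∈ I, 0 < a t ∧ a t < ε₀)
    (hd : ∀ t ∈ I, DifferentiableAt ℝ a t)
    (hode : ∀ t ∈ I, deriv a t / a t * Real.sqrt (ε₀ ^ 2 - (a t) ^ 2) = ε₁) :
    ∃ ε₂ : ℝ, ∀ t ∈ I,
      Real.sqrt (ε₀ ^ 2 - (a t) ^ 2)
        - ε₀ * Real.log (ε₀ + Real.sqrt (ε₀ ^ 2 - (a t) ^ 2))
        + ε₀ * Real.log (a t) = ε₁ * t + ε₂ := by
  set g : ℝ → ℝ := fun t =>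
    Real.sqrt (ε₀ ^ 2 - (a t) ^ 2)
      - ε₀ * Real.log (ε₀ + Real.sqrt (ε₀ ^ 2 - (a t) ^ 2))
      + ε₀ * Real.log (a t) - ε₁ * t with hg
  have key : ∀ t ∈ I, HasDerivAt g 0 t := by
    intro t ht
    obtain ⟨hpos, hlt⟩ := ha t ht
    have hsq : 0 < ε₀ ^ 2 - (a t) ^ 2 := by nlinarith
    set s := Real.sqrt (ε₀ ^ 2 - (a t) ^ 2) with hs
    have hspos : 0 < s := Real.sqrt_pos.mpr hsq
    have hs2 : s ^ 2 = ε₀ ^ 2 - (a t) ^ 2 := Real.sq_sqrt hsq.le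
    have ha' : HasDerivAt a (deriv a t) t := (hd t ht).hasDerivAt
    have h1 : HasDerivAt (fun u => ε₀ ^ 2 - (a u) ^ 2)
        (-(2 * a t * deriv a t)) t := by
      have := ((ha'.pow 2).const_sub (ε₀ ^ 2))
      exact this.congr_deriv (by norm_num)
    have h2 : HasDerivAt (fun u => Real.sqrt (ε₀ ^ 2 - (a u) ^ 2))
        (-(2 * a t * deriv a t) / (2 * s)) t := h1.sqrt hsq.ne'
    have h3 : HasDerivAt (fun u => ε₀ + Real.sqrt (ε₀ ^ 2 - (a u) ^ 2))
        (-(2 * a t * deriv a t) / (2 * s)) t := h2.const_add ε₀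
    have h4 : HasDerivAt (fun u => Real.log (ε₀ + Real.sqrt (ε₀ ^ 2 - (a u) ^ 2)))
        ((-(2 * a t * deriv a t) / (2 * s)) / (ε₀ + s)) t :=
      h3.log (by positivity)
    have h5 : HasDerivAt (fun u => Real.log (a u)) (deriv a t / a t) t :=
      ha'.log hpos.ne'
    have h6 : HasDerivAt g
        (-(2 * a t * deriv a t) / (2 * s)
          - ε₀ * ((-(2 * a t * deriv a t) / (2 * s)) / (ε₀ + s))
          + ε₀ * (deriv a t / a t) - ε₁) t := by
      exact (((h2.sub (h4.const_mul ε₀)).add (h5.const_mul ε₀)).sub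
        ((hasDerivAt_id t).const_mul ε₁)).congr_deriv (by ring)
    convert h6 using 1
    have hode' := hode t ht
    have hne : s ≠ 0 := hspos.ne'
    have hne2 : (ε₀ + s) ≠ 0 := by positivity
    field_simp at hode' ⊢
    rw [← hs] at hode'
    linear_combination (-(ε₀ + s) * s) * hode' + (deriv a t * s) * hs2
  rcases Set.eq_empty_or_nonempty I with hE | ⟨t₀, ht₀⟩
  · exact ⟨0, by simp [hE]⟩
  · refine ⟨g t₀, fun t ht => ?_⟩
    have hconst : ‖g t - g t₀‖ ≤ 0 * ‖t - t₀‖ := by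
      apply hI.norm_image_sub_le_of_norm_hasDerivWithin_le
        (fun u hu => (key u hu).hasDerivWithinAt)
        (fun u hu => by simp) ht₀ ht
    have : g t = g t₀ := by
      have := hconst
      simp only [zero_mul] at this
      have h0 : ‖g t - g t₀‖ = 0 := le_antisymm this (norm_nonneg _)
      have := norm_eq_zero.mp h0
      linarith [sub_eq_zero.mp this]
    simp only [hg] at this ⊢
    linarith
end

section
/- Let ε₀ > 0 and let a : I → ℝ be a differentiable function on an interval I with a(t) > ε₀ satisfying (a'(t)/a(t))·√(a(t)² − ε₀²) = ε₁ for a constant ε₁. Then there exists a constant ε₂ such that √(a(t)² − ε₀²) − ε₀·arcsec(a(t)/ε₀) = ε₁ t + ε₂ for all t ∈ I. -/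
/-- Here `arcsec x = arccos (1/x)`, so `arcsec (a t / ε₀) = arccos (ε₀ / a t)`. -/
theorem stmt_6 (I : Set ℝ) (hI : Convex ℝ I) (a : ℝ → ℝ) (ε₀ ε₁ : ℝ)
    (hε₀ : 0 < ε₀)
    (ha : ∀ t ∈ I, ε₀ < a t)
    (hd : ∀ t ∈ I, DifferentiableAt ℝ a t)
    (hode : ∀ t ∈ I, deriv a t / a t * Real.sqrt ((a t) ^ 2 - ε₀ ^ 2) = ε₁) :
    ∃ ε₂ : ℝ, ∀ t ∈ I,
      Real.sqrt ((a t) ^ 2 - ε₀ ^ 2)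
        - ε₀ * Real.arccos (1 / (a t / ε₀)) = ε₁ * t + ε₂ := by
  rcases Set.eq_empty_or_nonempty I with hIe | ⟨t₀, ht₀⟩
  · exact ⟨0, by simp [hIe]⟩
  set F : ℝ → ℝ := fun t =>
    Real.sqrt ((a t) ^ 2 - ε₀ ^ 2) - ε₀ * Real.arccos (1 / (a t / ε₀)) - ε₁ * t with hF
  have key : ∀ t ∈ I, HasDerivAt F 0 t := by
    intro t ht
    have hat : ε₀ < a t := ha t ht
    have hat0 : 0 < a t := lt_trans hε₀ hat
    have hs2 : (0:ℝ) < (a t) ^ 2 - ε₀ ^ 2 := by nlinarith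
    set s := Real.sqrt ((a t) ^ 2 - ε₀ ^ 2) with hsdef
    have hspos : 0 < s := Real.sqrt_pos.mpr hs2
    have hssq : s ^ 2 = (a t) ^ 2 - ε₀ ^ 2 := Real.sq_sqrt hs2.le
    have hda : HasDerivAt a (deriv a t) t := (hd t ht).hasDerivAt
    -- derivative of sqrt part
    have h1 : HasDerivAt (fun u => Real.sqrt ((a u) ^ 2 - ε₀ ^ 2))
        (1 / (2 * s) * (2 * a t * deriv a t)) t := by
      have hinner : HasDerivAt (fun u => (a u) ^ 2 - ε₀ ^ 2) (2 * a t * deriv a t) t := by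
        have := (hda.pow 2).sub_const (ε₀ ^ 2)
        simpa [mul_comm, mul_assoc, mul_left_comm] using this
      exact (Real.hasDerivAt_sqrt hs2.ne').comp t hinner
    -- derivative of arccos part
    have hu : HasDerivAt (fun u => ε₀ / a u) (-(ε₀ * deriv a t) / (a t) ^ 2) t := by
      have := (hasDerivAt_const t ε₀).div hda hat0.ne'
      exact this.congr_deriv (by ring)
    have hx1 : ε₀ / a t ≠ -1 := by
      have : 0 < ε₀ / a t := div_pos hε₀ hat0
      linarith
    have hx2 : ε₀ / a t ≠ 1 := by
      have h : ε₀ / a t < 1 := (div_lt_one hat0).mpr hat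
      linarith
    have hsq : Real.sqrt (1 - (ε₀ / a t) ^ 2) = s / a t := by
      have he : 1 - (ε₀ / a t) ^ 2 = ((a t) ^ 2 - ε₀ ^ 2) / (a t) ^ 2 := by
        field_simp
      rw [he, Real.sqrt_div hs2.le, Real.sqrt_sq hat0.le]
    have h2 : HasDerivAt (fun u => Real.arccos (ε₀ / a u))
        (-(1 / (s / a t)) * (-(ε₀ * deriv a t) / (a t) ^ 2)) t := by
      have := (Real.hasDerivAt_arccos hx1 hx2).comp t hu
      rw [hsq] at this
      exact this
    have h2' : HasDerivAt (fun u => Real.arccos (1 / (a u / ε₀)))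
        (-(1 / (s / a t)) * (-(ε₀ * deriv a t) / (a t) ^ 2)) t := by
      refine h2.congr_of_eventuallyEq ?_
      filter_upwards [hda.continuousAt.eventually_ne hat0.ne'] with u hu0
      rw [one_div_div]
    -- combine
    have hode' : deriv a t / a t * s = ε₁ := hode t ht
    have hF' : HasDerivAt F
        (1 / (2 * s) * (2 * a t * deriv a t)
          - ε₀ * (-(1 / (s / a t)) * (-(ε₀ * deriv a t) / (a t) ^ 2)) - ε₁) t := by
      have h3 : HasDerivAt (fun u : ℝ => ε₁ * u) ε₁ t := by
        simpa using (hasDerivAt_id t).const_mul ε₁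
      exact (h1.sub (h2'.const_mul ε₀)).sub h3
    have hval : 1 / (2 * s) * (2 * a t * deriv a t)
          - ε₀ * (-(1 / (s / a t)) * (-(ε₀ * deriv a t) / (a t) ^ 2)) - ε₁ = 0 := by
      rw [← hode']
      field_simp
      linear_combination (-(deriv a t)) * hssq
    rw [hval] at hF'
    exact hF'
  -- F is constant on I
  refine ⟨F t₀, fun t ht => ?_⟩
  have hconst : F t = F t₀ := by
    have := hI.norm_image_sub_le_of_norm_hasDerivWithin_le
      (f := F) (f' := fun _ => 0) (s := I) (C := 0)
      (fun x hx => (key x hx).hasDerivWithinAt)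
      (fun x _ => by simp) ht₀ ht
    have h0 : ‖F t - F t₀‖ ≤ 0 := by simpa using this
    have := norm_nonneg (F t - F t₀)
    have : ‖F t - F t₀‖ = 0 := le_antisymm h0 this
    have := norm_eq_zero.mp this
    linarith [sub_eq_zero.mp this]
  rw [← hconst]
  simp only [hF]
  ring
end
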